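/- In the heteroscedastic model log T = β0 + β1 x + (1 − a x)ε with exp(ε) ~ Exp(λ), x ∈ {0,1}, 0 < a < 1, t0 > 0, the τ-th conditional quantile q(x) of T − t0 given T ≥ t0 satisfies: q(0) = −λ⁻¹ log(1−τ) exp(β0) (memorylessness for x = 0), while q(1) = t0[1 − λ⁻¹ t0^{−1/(1−a)} log(1−τ) exp((β0+β1)/(1−a))]^{1−a} − t0, so that the log-quantile difference log q(1) − log q(0) equals the stated α1(τ, t0) formula of the paper. -/

import Mathlib

open MeasureTheory ProbabilityTheory Real Filter Topology

lemma surv_le {Ω : Type*} [MeasurableSpace Ω] (P : Measure Ω) [IsProbabilityMeasure P]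
    (ε : Ω → ℝ) (hε : Measurable ε) (lam : ℝ) (hlam : 0 < lam)
    (hexp : ∀ s : ℝ, 0 ≤ s → P {ω | s < Real.exp (ε ω)} = ENNReal.ofReal (Real.exp (-lam * s)))
    (s : ℝ) (hs : 0 < s) :
    P {ω | s ≤ Real.exp (ε ω)} = ENNReal.ofReal (Real.exp (-lam * s)) := by
  set A : ℕ → Set Ω := fun n => {ω | s - s / (n + 2) < Real.exp (ε ω)} with hA
  have hAn : ∀ n : ℕ, (0:ℝ) ≤ s - s / (n + 2) := by
    intro n
    have h1 : s / (n + 2) ≤ s / 1 := by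
      apply div_le_div_of_nonneg_left hs.le one_pos
      have : (0:ℝ) ≤ (n:ℝ) := Nat.cast_nonneg n
      linarith
    simp at h1; linarith
  have hset : {ω | s ≤ Real.exp (ε ω)} = ⋂ n : ℕ, A n := by
    ext ω
    simp only [hA, Set.mem_setOf_eq, Set.mem_iInter]
    constructor
    · intro h n
      have : 0 < s / (n + 2) := by positivity
      linarith
    · intro h
      by_contra hlt
      push_neg at hlt
      obtain ⟨n, hn⟩ := exists_nat_gt (s / (s - Real.exp (ε ω)))
      have hd : 0 < s - Real.exp (ε ω) := by linarith
      have h2 : s / (n + 2) < s - Real.exp (ε ω) := by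
        rw [div_lt_iff₀ (by positivity)]
        have h3 : s / (s - Real.exp (ε ω)) < (n:ℝ) + 2 := by linarith
        have h4 : s = (s / (s - Real.exp (ε ω))) * (s - Real.exp (ε ω)) := by field_simp
        nlinarith [mul_lt_mul_of_pos_right h3 hd]
      have := h n
      linarith
  have hmeas : ∀ n, NullMeasurableSet (A n) P := by
    intro n
    exact (measurableSet_lt measurable_const (Real.measurable_exp.comp hε)).nullMeasurableSet
  have hanti : Antitone A := by
    intro m n hmn ω hω
    simp only [hA, Set.mem_setOf_eq] at hω ⊢
    have : s / (n + 2) ≤ s / (m + 2) := by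
      apply div_le_div_of_nonneg_left hs.le (by positivity)
      have : (m:ℝ) ≤ (n:ℝ) := Nat.cast_le.mpr hmn
      linarith
    linarith
  have htend := tendsto_measure_iInter_atTop (μ := P) hmeas hanti ⟨0, measure_ne_top P _⟩
  have hval : ∀ n : ℕ, (P ∘ A) n = ENNReal.ofReal (Real.exp (-lam * (s - s / (n + 2)))) := by
    intro n
    exact hexp _ (hAn n)
  have htend2 : Tendsto (P ∘ A) atTop (𝓝 (ENNReal.ofReal (Real.exp (-lam * s)))) := by
    rw [funext hval]
    apply ENNReal.tendsto_ofReal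
    apply (Real.continuous_exp.tendsto _).comp
    have h0 : Tendsto (fun n : ℕ => s / (n + 2)) atTop (𝓝 0) := by
      apply Tendsto.div_atTop (tendsto_const_nhds)
      apply tendsto_atTop_add_const_right
      exact tendsto_natCast_atTop_atTop
    have : Tendsto (fun n : ℕ => -lam * (s - s / (n + 2))) atTop (𝓝 (-lam * (s - 0))) := by
      apply Tendsto.const_mul
      exact tendsto_const_nhds.sub h0
    simpa using this
  rw [hset]
  exact tendsto_nhds_unique htend htend2

lemma cond_calc {Ω : Type*} [MeasurableSpace Ω] (P : Measure Ω) [IsProbabilityMeasure P]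
    (ε : Ω → ℝ) (hε : Measurable ε) (lam : ℝ) (hlam : 0 < lam)
    (hexp : ∀ s : ℝ, 0 ≤ s → P {ω | s < Real.exp (ε ω)} = ENNReal.ofReal (Real.exp (-lam * s)))
    (τ : ℝ) (hτ : τ ∈ Set.Ioo (0 : ℝ) 1) (c1 c2 : ℝ) (hc1 : 0 < c1)
    (hc : c2 - c1 = -lam⁻¹ * Real.log (1 - τ)) :
    ProbabilityTheory.cond P {ω | c1 ≤ Real.exp (ε ω)} {ω | Real.exp (ε ω) ≤ c2}
      = ENNReal.ofReal τ := by
  obtain ⟨hτ0, hτ1⟩ := hτ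
  have hlogτ : Real.log (1 - τ) < 0 := Real.log_neg (by linarith) (by linarith)
  have hpos : 0 < -lam⁻¹ * Real.log (1 - τ) := by
    have : 0 < lam⁻¹ := inv_pos.mpr hlam
    nlinarith
  have hc12 : c1 ≤ c2 := by linarith
  have hc2 : (0:ℝ) ≤ c2 := by linarith
  have hA := surv_le P ε hε lam hlam hexp c1 hc1
  have hC := hexp c2 hc2
  have hAmeas : MeasurableSet {ω | c1 ≤ Real.exp (ε ω)} :=
    measurableSet_le measurable_const (Real.measurable_exp.comp hε)
  have hCmeas : MeasurableSet {ω | c2 < Real.exp (ε ω)} :=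
    measurableSet_lt measurable_const (Real.measurable_exp.comp hε)
  have hsub : {ω | c2 < Real.exp (ε ω)} ⊆ {ω | c1 ≤ Real.exp (ε ω)} := by
    intro ω hω; simp only [Set.mem_setOf_eq] at hω ⊢; linarith
  have hinter : {ω | c1 ≤ Real.exp (ε ω)} ∩ {ω | Real.exp (ε ω) ≤ c2}
      = {ω | c1 ≤ Real.exp (ε ω)} \ {ω | c2 < Real.exp (ε ω)} := by
    ext ω
    simp only [Set.mem_inter_iff, Set.mem_diff, Set.mem_setOf_eq, not_lt]
  have he2 : Real.exp (-lam * c2) = (1 - τ) * Real.exp (-lam * c1) := by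
    have h1 : -lam * c2 = Real.log (1 - τ) + -lam * c1 := by
      have h2 : lam * lam⁻¹ = 1 := mul_inv_cancel₀ hlam.ne'
      nlinarith [hc]
    rw [h1, Real.exp_add, Real.exp_log (by linarith : (0:ℝ) < 1 - τ)]
  have hPdiff : P ({ω | c1 ≤ Real.exp (ε ω)} \ {ω | c2 < Real.exp (ε ω)})
      = ENNReal.ofReal (τ * Real.exp (-lam * c1)) := by
    rw [measure_diff hsub hCmeas.nullMeasurableSet (measure_ne_top P _), hA, hC,
      ← ENNReal.ofReal_sub _ (Real.exp_nonneg _)]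
    congr 1
    rw [he2]; ring
  rw [ProbabilityTheory.cond_apply hAmeas, hinter, hPdiff, hA,
    ENNReal.ofReal_mul hτ0.le, ← mul_assoc, mul_comm _ (ENNReal.ofReal τ), mul_assoc,
    ENNReal.inv_mul_cancel, mul_one]
  · exact (ENNReal.ofReal_pos.mpr (Real.exp_pos _)).ne'
  · exact ENNReal.ofReal_ne_top

lemma iff_le_aux (b p t e : ℝ) (hp : 0 < p) (ht : 0 < t) :
    t ≤ Real.exp (b + p * e) ↔ Real.exp ((Real.log t - b) / p) ≤ Real.exp e := by
  rw [Real.exp_le_exp, div_le_iff₀ hp, mul_comm e p]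
  constructor <;> intro h
  · rw [← Real.log_le_iff_le_exp ht] at h; linarith
  · rw [← Real.log_le_iff_le_exp ht]; linarith

lemma iff_ge_aux (b p t e : ℝ) (hp : 0 < p) (ht : 0 < t) :
    Real.exp (b + p * e) ≤ t ↔ Real.exp e ≤ Real.exp ((Real.log t - b) / p) := by
  rw [Real.exp_le_exp, le_div_iff₀ hp, mul_comm e p]
  constructor <;> intro h
  · rw [← Real.le_log_iff_exp_le ht] at h; linarith
  · rw [← Real.le_log_iff_exp_le ht]; linarith

theorem stmt16 {Ω : Type*} [MeasurableSpace Ω] (P : Measure Ω) [IsProbabilityMeasure P]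
    (ε : Ω → ℝ) (hε : Measurable ε) (lam : ℝ) (hlam : 0 < lam)
    (hexp : ∀ s : ℝ, 0 ≤ s → P {ω | s < Real.exp (ε ω)} = ENNReal.ofReal (Real.exp (-lam * s)))
    (β0 β1 a t0 τ : ℝ) (ha : 0 < a ∧ a < 1) (ht0 : 0 < t0) (hτ : τ ∈ Set.Ioo (0 : ℝ) 1)
    (T : ℝ → Ω → ℝ)
    (hTdef : ∀ x ω, T x ω = Real.exp (β0 + β1 * x + (1 - a * x) * ε ω))
    (q0 q1 : ℝ)
    (hq0 : q0 = -lam⁻¹ * Real.log (1 - τ) * Real.exp β0)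
    (hq1 : q1 = t0 * (1 - lam⁻¹ * t0 ^ (-(1 / (1 - a))) * Real.log (1 - τ) *
        Real.exp ((β0 + β1) / (1 - a))) ^ (1 - a) - t0) :
    ProbabilityTheory.cond P {ω | t0 ≤ T 0 ω} {ω | T 0 ω - t0 ≤ q0} = ENNReal.ofReal τ ∧
    ProbabilityTheory.cond P {ω | t0 ≤ T 1 ω} {ω | T 1 ω - t0 ≤ q1} = ENNReal.ofReal τ ∧
    Real.log q1 - Real.log q0 =
      Real.log ((t0 * (1 - lam⁻¹ * t0 ^ (-(1 / (1 - a))) * Real.log (1 - τ) *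
          Real.exp ((β0 + β1) / (1 - a))) ^ (1 - a) - t0) /
        (-lam⁻¹ * Real.log (1 - τ) * Real.exp β0)) := by
  obtain ⟨ha0, ha1⟩ := ha
  have hτ0 : (0:ℝ) < τ := hτ.1
  have hτ1 : τ < 1 := hτ.2
  have h1a : (0:ℝ) < 1 - a := by linarith
  have hlogτ : Real.log (1 - τ) < 0 := Real.log_neg (by linarith) (by linarith)
  have hlaminv : (0:ℝ) < lam⁻¹ := inv_pos.mpr hlam
  have hLpos : 0 < -lam⁻¹ * Real.log (1 - τ) := by nlinarith
  have hq0pos : 0 < q0 := by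
    rw [hq0]; exact mul_pos hLpos (Real.exp_pos _)
  set K : ℝ := 1 - lam⁻¹ * t0 ^ (-(1 / (1 - a))) * Real.log (1 - τ) *
      Real.exp ((β0 + β1) / (1 - a)) with hKdef
  have hrpos : (0:ℝ) < t0 ^ (-(1 / (1 - a))) := Real.rpow_pos_of_pos ht0 _
  have hK1 : 1 < K := by
    have h1 : 0 < (-lam⁻¹ * Real.log (1 - τ)) * (t0 ^ (-(1 / (1 - a))) *
        Real.exp ((β0 + β1) / (1 - a))) := mul_pos hLpos (mul_pos hrpos (Real.exp_pos _))
    rw [hKdef]; nlinarith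
  have hKpos : (0:ℝ) < K := by linarith
  have hKpow : 1 < K ^ (1 - a) :=
    (Real.one_lt_rpow_iff_of_pos hKpos).mpr (Or.inl ⟨hK1, h1a⟩)
  have hKpowpos : (0:ℝ) < K ^ (1 - a) := by linarith
  have hq1pos : 0 < q1 := by
    rw [hq1]; nlinarith
  -- case x = 0
  have hT0 : ∀ ω, T 0 ω = Real.exp (β0 + 1 * ε ω) := by
    intro ω; rw [hTdef]; norm_num
  have hs1 : {ω | t0 ≤ T 0 ω}
      = {ω | Real.exp ((Real.log t0 - β0) / 1) ≤ Real.exp (ε ω)} := by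
    ext ω
    simp only [Set.mem_setOf_eq, hT0]
    exact iff_le_aux β0 1 t0 (ε ω) one_pos ht0
  have hs2 : {ω | T 0 ω - t0 ≤ q0}
      = {ω | Real.exp (ε ω) ≤ Real.exp ((Real.log (t0 + q0) - β0) / 1)} := by
    ext ω
    simp only [Set.mem_setOf_eq, hT0, sub_le_iff_le_add, add_comm q0 t0]
    exact iff_ge_aux β0 1 (t0 + q0) (ε ω) one_pos (by linarith)
  have hc0 : Real.exp ((Real.log (t0 + q0) - β0) / 1) - Real.exp ((Real.log t0 - β0) / 1)
      = -lam⁻¹ * Real.log (1 - τ) := by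
    rw [div_one, div_one, Real.exp_sub, Real.exp_sub, Real.exp_log ht0,
      Real.exp_log (by linarith : (0:ℝ) < t0 + q0), hq0]
    field_simp
    ring
  -- case x = 1
  have hT1 : ∀ ω, T 1 ω = Real.exp ((β0 + β1) + (1 - a) * ε ω) := by
    intro ω; rw [hTdef]; congr 1; ring
  have ht1 : {ω | t0 ≤ T 1 ω}
      = {ω | Real.exp ((Real.log t0 - (β0 + β1)) / (1 - a)) ≤ Real.exp (ε ω)} := by
    ext ω
    simp only [Set.mem_setOf_eq, hT1]
    exact iff_le_aux (β0 + β1) (1 - a) t0 (ε ω) h1a ht0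
  have ht2 : {ω | T 1 ω - t0 ≤ q1}
      = {ω | Real.exp (ε ω) ≤ Real.exp ((Real.log (t0 + q1) - (β0 + β1)) / (1 - a))} := by
    ext ω
    simp only [Set.mem_setOf_eq, hT1, sub_le_iff_le_add, add_comm q1 t0]
    exact iff_ge_aux (β0 + β1) (1 - a) (t0 + q1) (ε ω) h1a (by linarith)
  have hKexp : Real.exp ((Real.log t0 - (β0 + β1)) / (1 - a)) * (t0 ^ (-(1 / (1 - a))) *
      Real.exp ((β0 + β1) / (1 - a))) = 1 := by
    rw [Real.rpow_def_of_pos ht0, ← Real.exp_add, ← Real.exp_add, ← Real.exp_zero]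
    congr 1
    field_simp
    simp only [Real.exp_zero]; ring
  have hsum : t0 + q1 = t0 * K ^ (1 - a) := by rw [hq1]; ring
  have hlogsum : Real.log (t0 + q1) = Real.log t0 + (1 - a) * Real.log K := by
    rw [hsum, Real.log_mul ht0.ne' hKpowpos.ne', Real.log_rpow hKpos]
  have hexps : (Real.log (t0 + q1) - (β0 + β1)) / (1 - a)
      = (Real.log t0 - (β0 + β1)) / (1 - a) + Real.log K := by
    rw [hlogsum]; field_simp; ring
  have hc1 : Real.exp ((Real.log (t0 + q1) - (β0 + β1)) / (1 - a))
      - Real.exp ((Real.log t0 - (β0 + β1)) / (1 - a)) = -lam⁻¹ * Real.log (1 - τ) := by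
    rw [hexps, Real.exp_add, Real.exp_log hKpos, hKdef]
    linear_combination (-lam⁻¹ * Real.log (1 - τ)) * hKexp
  refine ⟨?_, ?_, ?_⟩
  · rw [hs1, hs2]
    exact cond_calc P ε hε lam hlam hexp τ hτ _ _ (Real.exp_pos _) hc0
  · rw [ht1, ht2]
    exact cond_calc P ε hε lam hlam hexp τ hτ _ _ (Real.exp_pos _) hc1
  · rw [← hq1, ← hq0, Real.log_div hq1pos.ne' hq0pos.ne']
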